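/- Let n ≥ 1, N = 2n + 1, and E > 0. On (ℂ²)^{⊗N} with standard basis {e_b : b ∈ {0,1}^N}, let H be the diagonal Hamiltonian with H e_b = E · wgt(b) · e_b, and let ρ be the diagonal density matrix with ρ e_b = 2^{−2n} e_b if b_N = 0 and ρ e_b = 0 if b_N = 1 (2n qubits at infinite temperature and one qubit at zero temperature). Then every unitary U attaining the minimum of tr(U ρ U† H) over all unitaries maps the span of {e_b : b_N = 0} onto the span of {e_w : wgt(w) ≤ n}; equivalently, for every basis vector e_w, the vector U† e_w lies in span{e_b : b_N = 0} if and only if wgt(w) ≤ n, so that the last bit of U^{−1} applied to a basis state computes the MAJORITY function. -/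

import Mathlib

namespace Stmt15

open Matrix Finset

abbrev Q (n : ℕ) := Fin (2 * n + 1) → Fin 2

def wgt {n : ℕ} (w : Q n) : ℕ := ∑ i, (w i : ℕ)

def flp {n : ℕ} (w : Q n) : Q n := fun i => 1 - w i

lemma flp_flp {n : ℕ} (w : Q n) : flp (flp w) = w := by
  have key : ∀ x : Fin 2, 1 - (1 - x) = x := by decide
  funext i
  exact key (w i)

lemma wgt_add_wgt_flp {n : ℕ} (w : Q n) : wgt w + wgt (flp w) = 2 * n + 1 := by
  have key : ∀ x : Fin 2, ((x : ℕ) + ((1 - x : Fin 2) : ℕ)) = 1 := by decide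
  unfold wgt flp
  rw [← Finset.sum_add_distrib]
  simp [key]

lemma half {n : ℕ} (p : Q n → Prop) [DecidablePred p]
    (h : ∀ w, p w ↔ ¬ p (flp w)) :
    (Finset.univ.filter p).card = 2 ^ (2 * n) := by
  classical
  have hb : (Finset.univ.filter p).card = (Finset.univ.filter (fun w => ¬ p w)).card := by
    apply Finset.card_bij' (fun w _ => flp w) (fun w _ => flp w)
    · intro a ha; simp only [Finset.mem_filter, Finset.mem_univ, true_and] at ha ⊢
      exact (h a).1 ha
    · intro a ha; simp only [Finset.mem_filter, Finset.mem_univ, true_and] at ha ⊢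
      have := (h (flp a)).2
      rw [flp_flp] at this
      exact this ha
    · intro a _; exact flp_flp a
    · intro a _; exact flp_flp a
  have htot := Finset.card_filter_add_card_filter_not
    (s := (Finset.univ : Finset (Q n))) (p := p)
  have hcard : (Finset.univ : Finset (Q n)).card = 2 ^ (2 * n + 1) := by
    simp [Finset.card_univ]
  have hp2 : 2 ^ (2 * n + 1) = 2 * 2 ^ (2 * n) := by ring
  omega

lemma cardA (n : ℕ) :
    (Finset.univ.filter (fun b : Q n => b (Fin.last (2 * n)) = 0)).card = 2 ^ (2 * n) := by
  apply half
  intro w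
  have : ∀ x : Fin 2, x = 0 ↔ ¬ (1 - x = 0) := by decide
  exact this (w (Fin.last (2 * n)))

lemma cardW (n : ℕ) :
    (Finset.univ.filter (fun w : Q n => wgt w ≤ n)).card = 2 ^ (2 * n) := by
  apply half
  intro w
  have h1 := wgt_add_wgt_flp w
  constructor
  · intro h; omega
  · intro h; omega

lemma subtypeCongr_prop {α} (p q : α → Prop) [DecidablePred p] [DecidablePred q]
    (e : {x // p x} ≃ {x // q x}) (f : {x // ¬p x} ≃ {x // ¬q x}) (a : α) :
    q (Equiv.subtypeCongr e f a) ↔ p a := by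
  unfold Equiv.subtypeCongr
  by_cases h : p a
  · rw [Equiv.trans_apply, Equiv.trans_apply, Equiv.sumCompl_symm_apply_of_pos (p := p) h]
    simp only [Equiv.sumCongr_apply, Sum.map_inl, Equiv.sumCompl_apply_inl]
    exact ⟨fun _ => h, fun _ => (e ⟨a, h⟩).2⟩
  · rw [Equiv.trans_apply, Equiv.trans_apply, Equiv.sumCompl_symm_apply_of_neg (p := p) h]
    simp only [Equiv.sumCongr_apply, Sum.map_inr, Equiv.sumCompl_apply_inr]
    exact ⟨fun hq => absurd hq (f ⟨a, h⟩).2, fun hp => absurd hp h⟩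

lemma trace_re {ι : Type*} [Fintype ι] [DecidableEq ι]
    (M : Matrix ι ι ℂ) (p h : ι → ℝ) :
    (M * Matrix.diagonal (fun b => (p b : ℂ)) * star M *
      Matrix.diagonal (fun w => (h w : ℂ))).trace.re
      = ∑ w, ∑ b, Complex.normSq (M w b) * p b * h w := by
  rw [Matrix.trace, Complex.re_sum]
  apply Finset.sum_congr rfl
  intro w _
  rw [Matrix.diag_apply, Matrix.mul_diagonal, Matrix.mul_apply]
  rw [show (∑ b, (M * Matrix.diagonal fun b => (p b : ℂ)) w b * (star M) b w)
      = ∑ b, ((Complex.normSq (M w b) * p b : ℝ) : ℂ) from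
    Finset.sum_congr rfl fun b _ => by
      rw [Matrix.mul_diagonal, Matrix.star_apply, Complex.star_def]
      push_cast
      rw [← Complex.mul_conj]
      ring]
  rw [← Complex.ofReal_sum]
  rw [show ((∑ b, (Complex.normSq (M w b) * p b : ℝ) : ℝ) : ℂ) * ((h w : ℝ) : ℂ)
      = ((((∑ b, Complex.normSq (M w b) * p b) * h w : ℝ)) : ℂ) by push_cast; ring]
  rw [Complex.ofReal_re, Finset.sum_mul]

lemma row_norm {ι : Type*} [Fintype ι] [DecidableEq ι]
    (U : Matrix ι ι ℂ) (hU : U * star U = 1) (w : ι) :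
    ∑ b, Complex.normSq (U w b) = 1 := by
  have hww := congrFun (congrFun hU w) w
  rw [Matrix.mul_apply, Matrix.one_apply_eq] at hww
  have h2 : ∑ b, ((Complex.normSq (U w b) : ℝ) : ℂ) = 1 := by
    rw [← hww]
    apply Finset.sum_congr rfl
    intro b _
    rw [Matrix.star_apply, Complex.star_def, Complex.mul_conj]
  have h3 := congrArg Complex.re h2
  rw [Complex.re_sum] at h3
  simpa using h3

lemma col_norm {ι : Type*} [Fintype ι] [DecidableEq ι]
    (U : Matrix ι ι ℂ) (hU : star U * U = 1) (b : ι) :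
    ∑ w, Complex.normSq (U w b) = 1 := by
  have hbb := congrFun (congrFun hU b) b
  rw [Matrix.mul_apply, Matrix.one_apply_eq] at hbb
  have h2 : ∑ w, ((Complex.normSq (U w b) : ℝ) : ℂ) = 1 := by
    rw [← hbb]
    apply Finset.sum_congr rfl
    intro w _
    rw [Matrix.star_apply, Complex.star_def, mul_comm, Complex.mul_conj]
  have h3 := congrArg Complex.re h2
  rw [Complex.re_sum] at h3
  simpa using h3

lemma mem_span_single {ι : Type*} [Fintype ι] [DecidableEq ι]
    (P : ι → Prop) [DecidablePred P] (v : ι → ℂ) (hv : ∀ w, ¬ P w → v w = 0) :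
    v ∈ Submodule.span ℂ {x : ι → ℂ | ∃ w, P w ∧ x = Pi.single w 1} := by
  have hrep : v = ∑ w, v w • (Pi.single w 1 : ι → ℂ) := by
    funext x
    rw [Finset.sum_apply]
    rw [show (∑ w, (v w • (Pi.single w 1 : ι → ℂ)) x) = ∑ w, (if x = w then v w else 0) from
      Finset.sum_congr rfl fun w _ => by
        by_cases hxw : x = w <;> simp [Pi.single_apply, hxw]]
    simp
  rw [hrep]
  apply Submodule.sum_mem
  intro w _
  by_cases hw : P w
  · exact Submodule.smul_mem _ _ (Submodule.subset_span ⟨w, hw, rfl⟩)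
  · rw [hv w hw, zero_smul]; exact Submodule.zero_mem _

lemma finrank_span_single {ι : Type*} [Fintype ι] [DecidableEq ι]
    (P : ι → Prop) [DecidablePred P] :
    Module.finrank ℂ (Submodule.span ℂ {x : ι → ℂ | ∃ w, P w ∧ x = Pi.single w 1})
      = (Finset.univ.filter P).card := by
  classical
  have hset : {x : ι → ℂ | ∃ w, P w ∧ x = Pi.single w 1}
      = Set.range (fun x : {w : ι // P w} => (Pi.single (x : ι) 1 : ι → ℂ)) := by
    ext x
    constructor
    · rintro ⟨w, hw, rfl⟩; exact ⟨⟨w, hw⟩, rfl⟩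
    · rintro ⟨⟨w, hw⟩, rfl⟩; exact ⟨w, hw, rfl⟩
  rw [hset]
  have hli : LinearIndependent ℂ (fun w : ι => (Pi.single w 1 : ι → ℂ)) := by
    have h1 := (Pi.basisFun ℂ ι).linearIndependent
    have h2 : ⇑(Pi.basisFun ℂ ι) = fun w : ι => (Pi.single w 1 : ι → ℂ) :=
      funext fun i => Pi.basisFun_apply ℂ ι i
    rwa [h2] at h1
  have hres : LinearIndependent ℂ (fun x : {w : ι // P w} => (Pi.single (x : ι) 1 : ι → ℂ)) :=
    hli.comp _ Subtype.val_injective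
  rw [finrank_span_eq_card hres, Fintype.card_subtype]

end Stmt15

set_option maxHeartbeats 2000000 in
open Stmt15 Matrix Finset in
/-- **Optimal heat engines on 2n hot (infinite-temperature) qubits and one
cold (zero-temperature) qubit compute MAJORITY.**  Every unitary minimizing
the average energy maps the support of `ρ` (the span of basis vectors whose
last bit is `0`) onto the span of the basis vectors of Hamming weight at most
`n`. -/
theorem stmt_15 (n : ℕ) (hn : 1 ≤ n) (E : ℝ) (hE : 0 < E)
    (U : Matrix (Fin (2 * n + 1) → Fin 2) (Fin (2 * n + 1) → Fin 2) ℂ)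
    (hU : U ∈ Matrix.unitaryGroup (Fin (2 * n + 1) → Fin 2) ℂ)
    (hopt : ∀ V ∈ Matrix.unitaryGroup (Fin (2 * n + 1) → Fin 2) ℂ,
      (Matrix.trace (U *
          Matrix.diagonal (fun b : Fin (2 * n + 1) → Fin 2 =>
            if b (Fin.last (2 * n)) = 0 then (((2 : ℝ) ^ (2 * n))⁻¹ : ℂ) else 0) *
          star U *
          Matrix.diagonal (fun b : Fin (2 * n + 1) → Fin 2 =>
            ((E * ∑ i, ((b i : ℕ) : ℝ) : ℝ) : ℂ)))).re ≤
      (Matrix.trace (V *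
          Matrix.diagonal (fun b : Fin (2 * n + 1) → Fin 2 =>
            if b (Fin.last (2 * n)) = 0 then (((2 : ℝ) ^ (2 * n))⁻¹ : ℂ) else 0) *
          star V *
          Matrix.diagonal (fun b : Fin (2 * n + 1) → Fin 2 =>
            ((E * ∑ i, ((b i : ℕ) : ℝ) : ℝ) : ℂ)))).re) :
    Submodule.map U.mulVecLin
      (Submodule.span ℂ {v : (Fin (2 * n + 1) → Fin 2) → ℂ |
        ∃ b : Fin (2 * n + 1) → Fin 2,
          b (Fin.last (2 * n)) = 0 ∧ v = Pi.single b 1}) =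
    Submodule.span ℂ {v : (Fin (2 * n + 1) → Fin 2) → ℂ |
      ∃ w : Fin (2 * n + 1) → Fin 2,
        (∑ i, (w i : ℕ)) ≤ n ∧ v = Pi.single w 1} := by
  classical
  set c : ℝ := ((2 : ℝ) ^ (2 * n))⁻¹ with hc_def
  have hc : 0 < c := by positivity
  set p : Q n → ℝ := fun b => if b (Fin.last (2 * n)) = 0 then c else 0 with hp_def
  set h : Q n → ℝ := fun w => E * (wgt w : ℝ) with hh_def
  -- rewrite the diagonal matrices in terms of `p` and `h`
  have hfun1 : (fun b : Q n =>
      if b (Fin.last (2 * n)) = 0 then (((2 : ℝ) ^ (2 * n))⁻¹ : ℂ) else 0)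
      = fun b => ((p b : ℝ) : ℂ) := by
    funext b
    rw [hp_def]
    by_cases hb : b (Fin.last (2 * n)) = 0 <;> simp only [hb, if_true, if_false, hc_def]
    · push_cast
      ring
    · simp
  have hdiag1 : (Matrix.diagonal (fun b : Q n =>
      if b (Fin.last (2 * n)) = 0 then (((2 : ℝ) ^ (2 * n))⁻¹ : ℂ) else 0))
      = Matrix.diagonal (fun b => ((p b : ℝ) : ℂ)) := by rw [hfun1]
  have hfun2 : (fun w : Q n => ((E * ∑ i, ((w i : ℕ) : ℝ) : ℝ) : ℂ))
      = fun w => ((h w : ℝ) : ℂ) := by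
    funext w
    rw [hh_def]
    exact congrArg Complex.ofReal (by unfold wgt; push_cast; ring)
  have hdiag2 : (Matrix.diagonal (fun w : Q n => ((E * ∑ i, ((w i : ℕ) : ℝ) : ℝ) : ℂ)))
      = Matrix.diagonal (fun w => ((h w : ℝ) : ℂ)) := by rw [hfun2]
  -- the objective functional
  have htr : ∀ M : Matrix (Q n) (Q n) ℂ,
      (Matrix.trace (M *
          Matrix.diagonal (fun b : Q n =>
            if b (Fin.last (2 * n)) = 0 then (((2 : ℝ) ^ (2 * n))⁻¹ : ℂ) else 0) *
          star M *
          Matrix.diagonal (fun w : Q n =>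
            ((E * ∑ i, ((w i : ℕ) : ℝ) : ℝ) : ℂ)))).re
        = ∑ w, ∑ b, Complex.normSq (M w b) * p b * h w := by
    intro M
    rw [hdiag1, hdiag2, trace_re]
  -- unitarity of U
  have hU' := hU
  rw [Matrix.mem_unitaryGroup_iff] at hU'
  have hU'' := hU
  rw [Matrix.mem_unitaryGroup_iff'] at hU''
  -- the row sums restricted to the support of ρ
  set s : Q n → ℝ := fun w => ∑ b ∈ Finset.univ.filter
      (fun b : Q n => b (Fin.last (2 * n)) = 0), Complex.normSq (U w b) with hs_def
  set t : Q n → ℝ := fun w => if wgt w ≤ n then (1 : ℝ) else 0 with ht_def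
  have hs_nonneg : ∀ w, 0 ≤ s w := fun w =>
    Finset.sum_nonneg fun b _ => Complex.normSq_nonneg _
  have hs_le_one : ∀ w, s w ≤ 1 := by
    intro w
    rw [hs_def]
    calc (∑ b ∈ Finset.univ.filter (fun b : Q n => b (Fin.last (2 * n)) = 0),
          Complex.normSq (U w b))
        ≤ ∑ b, Complex.normSq (U w b) :=
          Finset.sum_le_sum_of_subset_of_nonneg (Finset.filter_subset _ _)
            (fun b _ _ => Complex.normSq_nonneg _)
      _ = 1 := row_norm U hU' w
  have hs_sum : ∑ w, s w = (2 : ℝ) ^ (2 * n) := by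
    rw [hs_def]
    rw [Finset.sum_comm]
    rw [show (∑ b ∈ Finset.univ.filter (fun b : Q n => b (Fin.last (2 * n)) = 0),
        ∑ w, Complex.normSq (U w b))
        = ∑ b ∈ Finset.univ.filter (fun b : Q n => b (Fin.last (2 * n)) = 0), (1 : ℝ) from
      Finset.sum_congr rfl fun b _ => col_norm U hU'' b]
    rw [Finset.sum_const, cardA]
    simp
  have ht_sum : ∑ w, t w = (2 : ℝ) ^ (2 * n) := by
    rw [ht_def]
    rw [Finset.sum_boole]
    rw [cardW]
    simp
  -- the comparison permutation matching the two distinguished sets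
  have hcards : Fintype.card {b : Q n // b (Fin.last (2 * n)) = 0}
      = Fintype.card {w : Q n // wgt w ≤ n} := by
    rw [Fintype.card_subtype, Fintype.card_subtype, cardA, cardW]
  have hcards' : Fintype.card {b : Q n // ¬ b (Fin.last (2 * n)) = 0}
      = Fintype.card {w : Q n // ¬ wgt w ≤ n} := by
    rw [Fintype.card_subtype_compl, Fintype.card_subtype_compl, hcards]
  set σ : Equiv.Perm (Q n) :=
    Equiv.subtypeCongr (Fintype.equivOfCardEq hcards) (Fintype.equivOfCardEq hcards')
    with hσ_def
  have hσ : ∀ b, wgt (σ b) ≤ n ↔ b (Fin.last (2 * n)) = 0 := fun b => by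
    rw [hσ_def]
    exact subtypeCongr_prop (fun b : Q n => b (Fin.last (2 * n)) = 0)
      (fun w : Q n => wgt w ≤ n) (Fintype.equivOfCardEq hcards)
      (Fintype.equivOfCardEq hcards') b
  set V : Matrix (Q n) (Q n) ℂ := Matrix.of (fun w b => if σ b = w then 1 else 0) with hV_def
  have hVapp : ∀ w b, V w b = if σ b = w then 1 else 0 := fun w b => rfl
  have hVmem : V ∈ Matrix.unitaryGroup (Q n) ℂ := by
    rw [Matrix.mem_unitaryGroup_iff]
    ext w w'
    rw [Matrix.mul_apply]
    rw [show (∑ b, V w b * (star V) b w')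
        = ∑ b, ((if σ b = w then 1 else 0) * (if σ b = w' then 1 else 0) : ℂ) from
      Finset.sum_congr rfl fun b _ => by
        rw [Matrix.star_apply, hVapp, hVapp, Complex.star_def, apply_ite (starRingEnd ℂ)]
        simp]
    rw [Fintype.sum_equiv σ _
      (fun c => ((if c = w then 1 else 0) * (if c = w' then 1 else 0) : ℂ)) (fun b => rfl)]
    by_cases hww : w = w'
    · subst hww
      simp [Finset.sum_ite_eq', Matrix.one_apply]
    · rw [Matrix.one_apply_ne hww]
      apply Finset.sum_eq_zero
      intro c _
      by_cases h1 : c = w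
      · subst h1; rw [if_neg hww, mul_zero]
      · rw [if_neg h1, zero_mul]
  -- value of the objective at V
  have hFV : (∑ w, ∑ b, Complex.normSq (V w b) * p b * h w) = c * ∑ w, t w * h w := by
    rw [Finset.sum_comm]
    have step1 : ∀ b, (∑ w, Complex.normSq (V w b) * p b * h w) = p b * h (σ b) := by
      intro b
      rw [show (∑ w, Complex.normSq (V w b) * p b * h w)
          = ∑ w, (if σ b = w then p b * h w else 0) from
        Finset.sum_congr rfl fun w _ => by
          rw [hVapp, apply_ite Complex.normSq]
          simp only [Complex.normSq_one, Complex.normSq_zero]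
          by_cases hbw : σ b = w <;> simp [hbw]]
      rw [Finset.sum_ite_eq]
      simp
    rw [Finset.sum_congr rfl fun b _ => step1 b]
    have step2 : (∑ b, p b * h (σ b))
        = ∑ b ∈ Finset.univ.filter (fun b : Q n => b (Fin.last (2 * n)) = 0),
            c * h (σ b) := by
      rw [Finset.sum_filter]
      apply Finset.sum_congr rfl
      intro b _
      rw [hp_def]
      by_cases hb : b (Fin.last (2 * n)) = 0 <;> simp [hb]
    rw [step2]
    have step3 : (∑ b ∈ Finset.univ.filter (fun b : Q n => b (Fin.last (2 * n)) = 0),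
          c * h (σ b))
        = ∑ w ∈ Finset.univ.filter (fun w : Q n => wgt w ≤ n), c * h w := by
      apply Finset.sum_equiv σ
      · intro b
        simp only [Finset.mem_filter, Finset.mem_univ, true_and]
        exact (hσ b).symm
      · intro b _; rfl
    rw [step3, Finset.sum_filter, Finset.mul_sum]
    apply Finset.sum_congr rfl
    intro w _
    rw [ht_def]
    by_cases hw : wgt w ≤ n <;> simp [hw]
  -- value of the objective at U
  have hFU : (∑ w, ∑ b, Complex.normSq (U w b) * p b * h w) = c * ∑ w, s w * h w := by
    rw [Finset.mul_sum]
    apply Finset.sum_congr rfl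
    intro w _
    simp only [hs_def, hp_def]
    simp only [mul_ite, mul_zero, ite_mul, zero_mul]
    rw [← Finset.sum_filter, ← Finset.sum_mul, ← Finset.sum_mul]
    ring
  -- the optimality inequality in terms of `s` and `t`
  have hle : (∑ w, s w * h w) ≤ ∑ w, t w * h w := by
    have h1 := hopt V hVmem
    rw [htr U, htr V, hFU, hFV] at h1
    exact le_of_mul_le_mul_left h1 hc
  -- the threshold argument forces `s = t`
  have hEn : ∀ w, wgt w ≤ n → h w ≤ E * n := by
    intro w hw
    have hcast : (wgt w : ℝ) ≤ (n : ℝ) := by exact_mod_cast hw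
    have hrfl : h w = E * (wgt w : ℝ) := rfl
    rw [hrfl]
    nlinarith
  have hEn' : ∀ w, ¬ wgt w ≤ n → E * n + E ≤ h w := by
    intro w hw
    have hcast : ((n : ℝ) + 1) ≤ (wgt w : ℝ) := by
      have : n + 1 ≤ wgt w := Nat.not_le.mp hw
      exact_mod_cast this
    have hrfl : h w = E * (wgt w : ℝ) := rfl
    rw [hrfl]
    nlinarith
  have hkey : ∀ w, 0 ≤ (h w - (E * n + E / 2)) * (s w - t w) := by
    intro w
    by_cases hw : wgt w ≤ n
    · have h1 := hEn w hw
      have h2 : t w = 1 := by rw [ht_def]; simp [hw]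
      rw [h2]
      have := mul_nonneg (by linarith : (0:ℝ) ≤ (E * n + E / 2) - h w)
        (by linarith [hs_le_one w] : (0:ℝ) ≤ 1 - s w)
      nlinarith [this]
    · have h1 := hEn' w hw
      have h2 : t w = 0 := by rw [ht_def]; simp [hw]
      rw [h2]
      have := mul_nonneg (by linarith : (0:ℝ) ≤ h w - (E * n + E / 2))
        (by linarith [hs_nonneg w] : (0:ℝ) ≤ s w)
      nlinarith [this]
  have hsum0 : (∑ w, (h w - (E * n + E / 2)) * (s w - t w)) ≤ 0 := by
    have hexp : (∑ w, (h w - (E * n + E / 2)) * (s w - t w))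
        = (∑ w, s w * h w) - (∑ w, t w * h w)
          - (E * n + E / 2) * (∑ w, s w) + (E * n + E / 2) * (∑ w, t w) := by
      rw [Finset.mul_sum, Finset.mul_sum, ← Finset.sum_sub_distrib, ← Finset.sum_sub_distrib,
        ← Finset.sum_add_distrib]
      apply Finset.sum_congr rfl
      intro w _
      ring
    rw [hexp, hs_sum, ht_sum]
    linarith only [hle]
  have hst : ∀ w, s w = t w := by
    intro w
    have hz := (Finset.sum_eq_zero_iff_of_nonneg (fun w _ => hkey w)).mp
      (le_antisymm hsum0 (Finset.sum_nonneg fun w _ => hkey w)) w (Finset.mem_univ w)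
    rcases mul_eq_zero.mp hz with h' | h'
    · exfalso
      have h4 := sub_eq_zero.mp h'
      by_cases hw : wgt w ≤ n
      · have h3 := hEn w hw
        rw [h4] at h3
        linarith only [h3, hE]
      · have h3 := hEn' w hw
        rw [h4] at h3
        linarith only [h3, hE]
    · exact sub_eq_zero.mp h'
  -- the key vanishing of matrix entries
  have hU0 : ∀ w, ¬ wgt w ≤ n → ∀ b, b (Fin.last (2 * n)) = 0 → U w b = 0 := by
    intro w hw b hb
    have hsw : s w = 0 := by rw [hst w, ht_def]; simp [hw]
    rw [hs_def] at hsw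
    have hterm := (Finset.sum_eq_zero_iff_of_nonneg
      (fun b _ => Complex.normSq_nonneg (U w b))).mp hsw b (by simp [hb])
    exact Complex.normSq_eq_zero.mp hterm
  -- now the submodule statement
  have hle_span : Submodule.map U.mulVecLin
      (Submodule.span ℂ {v : Q n → ℂ |
        ∃ b : Q n, b (Fin.last (2 * n)) = 0 ∧ v = Pi.single b 1})
      ≤ Submodule.span ℂ {v : Q n → ℂ | ∃ w : Q n, wgt w ≤ n ∧ v = Pi.single w 1} := by
    rw [Submodule.map_span]
    apply Submodule.span_le.mpr
    rintro v ⟨x, ⟨b, hb, rfl⟩, rfl⟩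
    apply mem_span_single (fun w : Q n => wgt w ≤ n)
    intro w hw
    rw [Matrix.mulVecLin_apply, Matrix.mulVec_single]
    show U w b * 1 = 0
    rw [hU0 w hw b hb, zero_mul]
  -- linear equivalence induced by the unitary `U`
  have hinv1 : U.mulVecLin ∘ₗ (star U).mulVecLin = LinearMap.id := by
    rw [← Matrix.mulVecLin_mul, hU', Matrix.mulVecLin_one]
  have hinv2 : (star U).mulVecLin ∘ₗ U.mulVecLin = LinearMap.id := by
    rw [← Matrix.mulVecLin_mul, hU'', Matrix.mulVecLin_one]
  have hrank1 : Module.finrank ℂ (Submodule.map U.mulVecLin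
      (Submodule.span ℂ {v : Q n → ℂ |
        ∃ b : Q n, b (Fin.last (2 * n)) = 0 ∧ v = Pi.single b 1}))
      = 2 ^ (2 * n) := by
    rw [← LinearEquiv.ofLinear_toLinearMap (f := U.mulVecLin) (g := (star U).mulVecLin)
      (re₁₂ := RingHomInvPair.ids) (re₂₁ := RingHomInvPair.ids)
      (h₁ := hinv1) (h₂ := hinv2), LinearEquiv.finrank_map_eq]
    rw [finrank_span_single (fun b : Q n => b (Fin.last (2 * n)) = 0), cardA]
  have hrank2 : Module.finrank ℂ
      (Submodule.span ℂ {v : Q n → ℂ | ∃ w : Q n, wgt w ≤ n ∧ v = Pi.single w 1})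
      = 2 ^ (2 * n) := by
    have hfr := finrank_span_single (ι := Q n) (fun w : Q n => wgt w ≤ n)
    rw [cardW] at hfr
    exact hfr
  exact Submodule.eq_of_le_of_finrank_eq hle_span (by rw [hrank1]; exact hrank2.symm)
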